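/- For every β ∈ (0,1/2] there exists a constant C, independent of ν and η, such that for all ν ∈ (0,1] and all real η ≥ 3, the sum over the resonant modes satisfies ∑_{m=1}^{E(√η)} (ν^{1/3} η / m²) · ⟨ν^{1/3} t_{m,η}⟩^{−(1+β)} ≤ C. -/

import Mathlib

/-- Japanese bracket `⟨x⟩ = (1+x²)^{1/2}`. -/
noncomputable def jap (x : ℝ) : ℝ := Real.sqrt (1 + x ^ 2)

/-- Critical time `t_{m,η} = 2η/(2m+1)` (with the convention `t_{0,η} = 2η`). -/
noncomputable def tcrit (m : ℕ) (η : ℝ) : ℝ := 2 * η / (2 * (m : ℝ) + 1)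

/-- `D⁻_{m,η} = η/((2m+1)m)`. -/
noncomputable def Dminus (m : ℕ) (η : ℝ) : ℝ := η / ((2 * (m : ℝ) + 1) * (m : ℝ))

/-- The toy-model growth factor
`g_m(τ,η) = exp(⟨ν^{1/3}t_{m,η}⟩^{−(1+β)} (ν^{1/3}η/m²)(arctan τ + arctan D⁻_{m,η}))`. -/
noncomputable def gm (ν β : ℝ) (m : ℕ) (η τ : ℝ) : ℝ :=
  Real.exp ((jap (ν ^ ((1:ℝ)/3) * tcrit m η)) ^ (-(1 + β)) *
    (ν ^ ((1:ℝ)/3) * η / (m : ℝ) ^ 2) * (Real.arctan τ + Real.arctan (Dminus m η)))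

/-- `E(√η)`: the largest positive integer `E` with `(2E+1)E ≤ η`. -/
noncomputable def Esq (η : ℝ) : ℕ := sSup {E : ℕ | 1 ≤ E ∧ ((2 * (E : ℝ) + 1) * (E : ℝ)) ≤ η}

open Finset Real




lemma one_le_jap (x : ℝ) : 1 ≤ jap x := by
  have := Real.sqrt_le_sqrt (show (1:ℝ) ≤ 1 + x^2 by nlinarith [sq_nonneg x])
  rwa [Real.sqrt_one] at this

lemma le_jap (x : ℝ) : x ≤ jap x := by
  rcases le_or_gt x 0 with h | h
  · exact h.trans (Real.sqrt_nonneg _)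
  · have h1 : Real.sqrt (x^2) ≤ jap x := Real.sqrt_le_sqrt (by nlinarith)
    rwa [Real.sqrt_sq h.le] at h1

lemma tailsum (K : ℕ) : ∀ N : ℕ, K ≤ N →
    ∑ m ∈ Icc (K+1) N, (1:ℝ)/(m:ℝ)^2 ≤ 2/(2*K+1) - 2/(2*N+1) := by
  refine Nat.le_induction ?_ ?_
  · simp
  · intro N hKN ih
    rw [Finset.sum_Icc_succ_top (by omega)]
    have hN : (0:ℝ) < 2*(N:ℝ)+1 := by positivity
    have key : (1:ℝ)/((N:ℝ)+1)^2 ≤ 2/(2*(N:ℝ)+1) - 2/(2*((N:ℝ)+1)+1) := by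
      rw [div_sub_div _ _ (ne_of_gt hN) (by positivity)]
      rw [div_le_div_iff₀ (by positivity) (by positivity)]
      nlinarith [sq_nonneg ((N:ℝ)+1)]
    push_cast at ih ⊢
    linarith

lemma tailsum' (K N : ℕ) : ∑ m ∈ Icc (K+1) N, (1:ℝ)/(m:ℝ)^2 ≤ 2/(2*K+1) := by
  rcases le_or_gt K N with h | h
  · have h1 := tailsum K N h
    have h2 : (0:ℝ) < 2/(2*(N:ℝ)+1) := by positivity
    linarith
  · rw [Finset.Icc_eq_empty (by omega)]
    simp
    positivity

lemma headsum (β : ℝ) (hβ0 : 0 < β) (hβ1 : β ≤ 1) (K : ℕ) :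
    ∑ m ∈ Icc 1 K, (m:ℝ)^(β-1) ≤ (K:ℝ)^β/β := by
  induction K with
  | zero => simp [Real.zero_rpow (ne_of_gt hβ0)]
  | succ K ih =>
    rw [Finset.sum_Icc_succ_top (by omega)]
    have hK1 : (0:ℝ) < (K:ℝ)+1 := by positivity
    have step : (K:ℝ)^β + β*((K:ℝ)+1)^(β-1) ≤ ((K:ℝ)+1)^β := by
      have hb := rpow_one_add_le_one_add_mul_self
        (s := -(1/((K:ℝ)+1))) (p := β) (by
          rw [neg_le, neg_neg]
          exact (div_le_one hK1).mpr (by linarith)) hβ0.le hβ1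
      have h1 : (1:ℝ) + -(1/((K:ℝ)+1)) = (K:ℝ)/((K:ℝ)+1) := by
        field_simp
        ring
      rw [h1] at hb
      have h2 : ((K:ℝ)/((K:ℝ)+1))^β * ((K:ℝ)+1)^β = (K:ℝ)^β := by
        rw [← Real.mul_rpow (by positivity) (by positivity)]
        rw [div_mul_cancel₀]; exact ne_of_gt hK1
      have h3 : ((K:ℝ)+1)^(β-1) = ((K:ℝ)+1)^β / ((K:ℝ)+1) := by
        rw [Real.rpow_sub_one (ne_of_gt hK1)]
      have hKb : (0:ℝ) < ((K:ℝ)+1)^β := Real.rpow_pos_of_pos hK1 β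
      calc (K:ℝ)^β + β*((K:ℝ)+1)^(β-1)
          = ((K:ℝ)/((K:ℝ)+1))^β * ((K:ℝ)+1)^β + β*(((K:ℝ)+1)^β/((K:ℝ)+1)) := by rw [h2, h3]
        _ ≤ (1 + β * -(1/((K:ℝ)+1))) * ((K:ℝ)+1)^β + β*(((K:ℝ)+1)^β/((K:ℝ)+1)) := by
            nlinarith
        _ = ((K:ℝ)+1)^β := by ring
    have h4 : ((K:ℝ)+1)^(β-1) ≤ (((K:ℝ)+1)^β - (K:ℝ)^β)/β := by
      rw [le_div_iff₀ hβ0]; linarith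
    push_cast
    have h5 : (K:ℝ)^β/β + (((K:ℝ)+1)^β - (K:ℝ)^β)/β = ((K:ℝ)+1)^β/β := by ring
    linarith

lemma algid (s m β : ℝ) (hs : 0 < s) (hm : 0 < m) :
    (s/m^2) * (s/(2*m))^(-(1+β)) = 2^(1+β) * s^(-β) * m^(β-1) := by
  have e5 : (s/(2*m))^(-(1+β)) = (2*m)^(1+β)/s^(1+β) := by
    rw [Real.rpow_neg (by positivity), Real.div_rpow hs.le (by positivity), inv_div]
  have e1 : (2*m)^(1+β) = 2^(1+β) * m^(1+β) := Real.mul_rpow (by norm_num) hm.le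
  have e2 : s^(1+β) = s * s^β := by rw [Real.rpow_add hs, Real.rpow_one]
  have e3 : m^(1+β) = m^(2:ℕ) * m^(β-1) := by
    rw [← Real.rpow_natCast m 2, ← Real.rpow_add hm]
    push_cast
    congr 1
    ring
  have e4 : s^(-β) = (s^β)⁻¹ := Real.rpow_neg hs.le β
  rw [e5, e1, e2, e3, e4]
  have h1 : s^β ≠ 0 := ne_of_gt (Real.rpow_pos_of_pos hs β)
  field_simp

/-- for every `β ∈ (0,1/2]` there exists a constant `C`, independent of `ν`
and `η`, such that for all `ν ∈ (0,1]` and all real `η ≥ 3`,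
`∑_{m=1}^{E(√η)} (ν^{1/3}η/m²) ⟨ν^{1/3}t_{m,η}⟩^{−(1+β)} ≤ C`. -/
theorem stmt4 (β : ℝ) (hβ0 : 0 < β) (hβ1 : β ≤ 1/2) :
    ∃ C : ℝ, 0 < C ∧
      ∀ ν : ℝ, 0 < ν → ν ≤ 1 → ∀ η : ℝ, 3 ≤ η →
        ∑ m ∈ Finset.Icc 1 (Esq η),
          (ν ^ ((1:ℝ)/3) * η / (m : ℝ) ^ 2) *
            (jap (ν ^ ((1:ℝ)/3) * tcrit m η)) ^ (-(1 + β)) ≤ C := by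
  refine ⟨2^(1+β)/β + 2, by positivity, ?_⟩
  intro ν hν0 hν1 η hη
  set N := Esq η with hN
  set a : ℝ := ν ^ ((1:ℝ)/3) with ha
  have ha0 : 0 < a := Real.rpow_pos_of_pos hν0 _
  set s : ℝ := a * η with hsdef
  have hs : 0 < s := by positivity
  set K := Nat.floor s with hK
  set f : ℕ → ℝ := fun m => (a * η / (m : ℝ) ^ 2) * (jap (a * tcrit m η)) ^ (-(1 + β)) with hf
  -- pointwise bounds
  have japos : ∀ x : ℝ, 0 < jap x := fun x => lt_of_lt_of_le one_pos (one_le_jap x)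
  have hneg : -(1+β) ≤ 0 := by linarith
  have boundA : ∀ m : ℕ, 1 ≤ m → f m ≤ s * (1/(m:ℝ)^2) := by
    intro m hm
    have hm1 : (1:ℝ) ≤ (m:ℝ) := by exact_mod_cast hm
    have h1 : (jap (a * tcrit m η)) ^ (-(1+β)) ≤ 1 :=
      Real.rpow_le_one_of_one_le_of_nonpos (one_le_jap _) hneg
    have h2 : 0 ≤ a * η / (m:ℝ)^2 := by positivity
    calc f m ≤ (a * η / (m:ℝ)^2) * 1 := mul_le_mul_of_nonneg_left h1 h2
      _ = s * (1/(m:ℝ)^2) := by rw [hsdef]; ring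
  have boundB : ∀ m : ℕ, 1 ≤ m → f m ≤ 2^(1+β) * s^(-β) * (m:ℝ)^(β-1) := by
    intro m hm
    have hm1 : (1:ℝ) ≤ (m:ℝ) := by exact_mod_cast hm
    have hm0 : (0:ℝ) < m := by linarith
    have hx : s/(2*(m:ℝ)) ≤ jap (a * tcrit m η) := by
      refine le_trans ?_ (le_jap _)
      have heq : a * tcrit m η = 2*s/(2*(m:ℝ)+1) := by
        rw [tcrit, hsdef]; ring
      rw [heq, div_le_div_iff₀ (by linarith) (by linarith)]
      nlinarith
    have h2 : (jap (a * tcrit m η)) ^ (-(1+β)) ≤ (s/(2*(m:ℝ)))^(-(1+β)) :=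
      Real.rpow_le_rpow_of_nonpos (by positivity) hx hneg
    have h3 : 0 ≤ a * η / (m:ℝ)^2 := by positivity
    calc f m ≤ (a * η / (m:ℝ)^2) * (s/(2*(m:ℝ)))^(-(1+β)) :=
          mul_le_mul_of_nonneg_left h2 h3
      _ = (s/(m:ℝ)^2) * (s/(2*(m:ℝ)))^(-(1+β)) := by rw [hsdef]
      _ = 2^(1+β) * s^(-β) * (m:ℝ)^(β-1) := algid s m β hs hm0
  -- split the sum
  have hsplit : ∑ m ∈ Finset.Icc 1 N, f m =
      (∑ m ∈ (Finset.Icc 1 N).filter (fun m => m ≤ K), f m) +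
      ∑ m ∈ (Finset.Icc 1 N).filter (fun m => ¬ m ≤ K), f m :=
    (Finset.sum_filter_add_sum_filter_not _ _ _).symm
  have hfilter2 : (Finset.Icc 1 N).filter (fun m => ¬ m ≤ K) = Finset.Icc (K+1) N := by
    ext m; simp only [Finset.mem_filter, Finset.mem_Icc]; omega
  -- head bound
  have head : (∑ m ∈ (Finset.Icc 1 N).filter (fun m => m ≤ K), f m) ≤ 2^(1+β)/β := by
    have h1 : (∑ m ∈ (Finset.Icc 1 N).filter (fun m => m ≤ K), f m) ≤
        ∑ m ∈ (Finset.Icc 1 N).filter (fun m => m ≤ K), 2^(1+β) * s^(-β) * (m:ℝ)^(β-1) := by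
      refine Finset.sum_le_sum ?_
      intro m hm
      simp only [Finset.mem_filter, Finset.mem_Icc] at hm
      exact boundB m hm.1.1
    have h2 : ∑ m ∈ (Finset.Icc 1 N).filter (fun m => m ≤ K), 2^(1+β) * s^(-β) * (m:ℝ)^(β-1) ≤
        ∑ m ∈ Finset.Icc 1 K, 2^(1+β) * s^(-β) * (m:ℝ)^(β-1) := by
      refine Finset.sum_le_sum_of_subset_of_nonneg ?_ ?_
      · intro m hm
        simp only [Finset.mem_filter, Finset.mem_Icc] at hm ⊢
        omega
      · intro m _ hm2
        have : (0:ℝ) < m ∨ m = 0 := by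
          rcases Nat.eq_zero_or_pos m with h | h
          · right; exact_mod_cast h
          · left; exact_mod_cast h
        positivity
    have h3 : ∑ m ∈ Finset.Icc 1 K, 2^(1+β) * s^(-β) * (m:ℝ)^(β-1) =
        2^(1+β) * s^(-β) * ∑ m ∈ Finset.Icc 1 K, (m:ℝ)^(β-1) := by
      rw [Finset.mul_sum]
    have h4 : ∑ m ∈ Finset.Icc 1 K, (m:ℝ)^(β-1) ≤ (K:ℝ)^β/β :=
      headsum β hβ0 (by linarith) K
    have h5 : s^(-β) * (K:ℝ)^β ≤ 1 := by
      rcases Nat.eq_zero_or_pos K with h | h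
      · rw [h]
        simp [Real.zero_rpow (ne_of_gt hβ0)]
      · have hKs : (K:ℝ) ≤ s := Nat.floor_le hs.le
        have hK0 : (0:ℝ) ≤ (K:ℝ) := by positivity
        have : (K:ℝ)^β ≤ s^β := Real.rpow_le_rpow hK0 hKs hβ0.le
        have hsb : 0 < s^β := Real.rpow_pos_of_pos hs β
        rw [Real.rpow_neg hs.le]
        calc (s^β)⁻¹ * (K:ℝ)^β ≤ (s^β)⁻¹ * s^β := by
              exact mul_le_mul_of_nonneg_left this (by positivity)
          _ = 1 := inv_mul_cancel₀ (ne_of_gt hsb)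
    have hsn : 0 ≤ s^(-β) := le_of_lt (Real.rpow_pos_of_pos hs _)
    have h2b : (0:ℝ) < 2^(1+β) := Real.rpow_pos_of_pos two_pos _
    calc (∑ m ∈ (Finset.Icc 1 N).filter (fun m => m ≤ K), f m)
        ≤ 2^(1+β) * s^(-β) * ∑ m ∈ Finset.Icc 1 K, (m:ℝ)^(β-1) := by
          rw [← h3]; exact le_trans h1 h2
      _ ≤ 2^(1+β) * s^(-β) * ((K:ℝ)^β/β) := by
          exact mul_le_mul_of_nonneg_left h4 (by positivity)
      _ = 2^(1+β)/β * (s^(-β) * (K:ℝ)^β) := by ring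
      _ ≤ 2^(1+β)/β * 1 := by
          exact mul_le_mul_of_nonneg_left h5 (by positivity)
      _ = 2^(1+β)/β := mul_one _
  -- tail bound
  have tail : ∑ m ∈ (Finset.Icc 1 N).filter (fun m => ¬ m ≤ K), f m ≤ 2 := by
    rw [hfilter2]
    have h1 : ∑ m ∈ Finset.Icc (K+1) N, f m ≤ ∑ m ∈ Finset.Icc (K+1) N, s * (1/(m:ℝ)^2) := by
      refine Finset.sum_le_sum ?_
      intro m hm
      simp only [Finset.mem_Icc] at hm
      exact boundA m (by omega)
    have h2 : ∑ m ∈ Finset.Icc (K+1) N, s * (1/(m:ℝ)^2) =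
        s * ∑ m ∈ Finset.Icc (K+1) N, (1:ℝ)/(m:ℝ)^2 := by rw [Finset.mul_sum]
    have h3 := tailsum' K N
    have hsK : s ≤ 2*(K:ℝ)+1 := by
      have := Nat.lt_floor_add_one s
      have hK0 : (0:ℝ) ≤ (K:ℝ) := by positivity
      push_cast at this ⊢
      linarith
    have hden : (0:ℝ) < 2*(K:ℝ)+1 := by positivity
    calc ∑ m ∈ Finset.Icc (K+1) N, f m ≤ s * ∑ m ∈ Finset.Icc (K+1) N, (1:ℝ)/(m:ℝ)^2 := by
          rw [← h2]; exact h1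
      _ ≤ s * (2/(2*(K:ℝ)+1)) := mul_le_mul_of_nonneg_left h3 hs.le
      _ ≤ (2*(K:ℝ)+1) * (2/(2*(K:ℝ)+1)) := by
          exact mul_le_mul_of_nonneg_right hsK (by positivity)
      _ = 2 := by field_simp
  calc ∑ m ∈ Finset.Icc 1 N, f m ≤ 2^(1+β)/β + 2 := by rw [hsplit]; exact add_le_add head tail
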